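/- arXiv:2403.18368 — 2 statements merged into one kernel-verified Lean document; each statement's English description precedes it below -/
import Mathlib

section
/- Let X be a separable metric space with a locally finite Borel measure μ whose support is all of X, N ≥ 1, and K : X × X → ℝ^{N×N} a bounded continuous kernel with K(x,y) = K(y,x)ᵀ for all x, y. If K is integrally positive definite with respect to C(X,ℝ^N) ∩ L¹(X,ℝ^N), i.e., ∫_X∫_X f(x)ᵀ K(x,y) f(y) dμ(x) dμ(y) ≥ 0 for every continuous integrable f : X → ℝ^N, then K is positive definite: for all n, x₁,…,xₙ ∈ X, c₁,…,cₙ ∈ ℝ^N, ∑_{i,j} cᵢᵀ K(xᵢ,xⱼ) cⱼ ≥ 0. -/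
open MeasureTheory Matrix

/-- Frobenius norm of a real `N × N` matrix. -/
noncomputable def frobNorm {N : ℕ} (A : Matrix (Fin N) (Fin N) ℝ) : ℝ :=
  Real.sqrt (∑ i : Fin N, ∑ j : Fin N, (A i j) ^ 2)

section Aux

lemma abs_entry_le_frob {N : ℕ} (A : Matrix (Fin N) (Fin N) ℝ) (k l : Fin N) :
    |A k l| ≤ frobNorm A := by
  have hsum : (A k l) ^ 2 ≤ ∑ i : Fin N, ∑ j : Fin N, (A i j) ^ 2 := by
    calc (A k l) ^ 2 ≤ ∑ j : Fin N, (A k j) ^ 2 :=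
          Finset.single_le_sum (f := fun j => (A k j) ^ 2) (fun j _ => sq_nonneg _)
            (Finset.mem_univ l)
      _ ≤ ∑ i : Fin N, ∑ j : Fin N, (A i j) ^ 2 :=
          Finset.single_le_sum (f := fun i => ∑ j : Fin N, (A i j) ^ 2)
            (fun i _ => Finset.sum_nonneg fun j _ => sq_nonneg _) (Finset.mem_univ k)
  have h := Real.sqrt_le_sqrt hsum
  rwa [Real.sqrt_sq_eq_abs] at h

lemma dot_bound {N : ℕ} (A : Matrix (Fin N) (Fin N) ℝ) (v w : Fin N → ℝ) {C : ℝ}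
    (hA : frobNorm A ≤ C) :
    |v ⬝ᵥ (A *ᵥ w)| ≤ C * ((∑ k, |v k|) * (∑ l, |w l|)) := by
  have hentry : ∀ k l, |A k l| ≤ C := fun k l => le_trans (abs_entry_le_frob A k l) hA
  calc |v ⬝ᵥ (A *ᵥ w)| = |∑ k, v k * (A *ᵥ w) k| := rfl
    _ ≤ ∑ k, |v k * (A *ᵥ w) k| := Finset.abs_sum_le_sum_abs _ _
    _ ≤ ∑ k, |v k| * (C * ∑ l, |w l|) := by
        refine Finset.sum_le_sum fun k _ => ?_
        rw [abs_mul]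
        refine mul_le_mul_of_nonneg_left ?_ (abs_nonneg _)
        calc |(A *ᵥ w) k| = |∑ l, A k l * w l| := rfl
          _ ≤ ∑ l, |A k l * w l| := Finset.abs_sum_le_sum_abs _ _
          _ ≤ ∑ l, C * |w l| := Finset.sum_le_sum fun l _ => by
              rw [abs_mul]
              exact mul_le_mul_of_nonneg_right (hentry k l) (abs_nonneg _)
          _ = C * ∑ l, |w l| := by rw [Finset.mul_sum]
    _ = C * ((∑ k, |v k|) * (∑ l, |w l|)) := by rw [← Finset.sum_mul]; ring

lemma sum_dotProduct' {N : ℕ} {ι : Type*} (s : Finset ι) (u : ι → Fin N → ℝ) (w : Fin N → ℝ) :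
    (∑ i ∈ s, u i) ⬝ᵥ w = ∑ i ∈ s, u i ⬝ᵥ w := by
  simp only [dotProduct, Finset.sum_apply, Finset.sum_mul]
  exact Finset.sum_comm

lemma dotProduct_sum' {N : ℕ} {ι : Type*} (s : Finset ι) (w : Fin N → ℝ) (u : ι → Fin N → ℝ) :
    w ⬝ᵥ (∑ i ∈ s, u i) = ∑ i ∈ s, w ⬝ᵥ u i := by
  simp only [dotProduct, Finset.sum_apply, Finset.mul_sum]
  exact Finset.sum_comm

lemma mulVec_sum' {N : ℕ} {ι : Type*} (s : Finset ι) (M : Matrix (Fin N) (Fin N) ℝ)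
    (u : ι → Fin N → ℝ) : M *ᵥ (∑ i ∈ s, u i) = ∑ i ∈ s, M *ᵥ u i := by
  funext k
  simp only [mulVec, dotProduct, Finset.sum_apply, Finset.mul_sum]
  exact Finset.sum_comm

lemma bilin_expand {N n : ℕ} (M : Matrix (Fin N) (Fin N) ℝ) (s t : Fin n → ℝ)
    (c d : Fin n → Fin N → ℝ) :
    (∑ i, s i • c i) ⬝ᵥ (M *ᵥ (∑ j, t j • d j)) =
      ∑ i, ∑ j, s i * t j * (c i ⬝ᵥ (M *ᵥ d j)) := by
  rw [sum_dotProduct']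
  refine Finset.sum_congr rfl fun i _ => ?_
  rw [smul_dotProduct, mulVec_sum', dotProduct_sum', smul_eq_mul, Finset.mul_sum]
  refine Finset.sum_congr rfl fun j _ => ?_
  rw [mulVec_smul, dotProduct_smul, smul_eq_mul]
  ring

lemma exists_bump {X : Type*} [MetricSpace X] [MeasurableSpace X] [BorelSpace X]
    (μ : Measure X) (hsupp : ∀ U : Set X, IsOpen U → U.Nonempty → 0 < μ U)
    (x₀ : X) {ε : ℝ} (hε : 0 < ε) (hfin : μ (Metric.closedBall x₀ ε) < ⊤) :
    ∃ g : X → ℝ, Continuous g ∧ (∀ a, 0 ≤ g a) ∧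
      (∀ a, a ∉ Metric.closedBall x₀ ε → g a = 0) ∧ Integrable g μ ∧ ∫ a, g a ∂μ = 1 := by
  set h : X → ℝ := fun a => max (1 - dist a x₀ / ε) 0 with hh
  have hcont : Continuous h :=
    (continuous_const.sub ((continuous_id.dist continuous_const).div_const ε)).max
      continuous_const
  have hnn : ∀ a, 0 ≤ h a := fun a => le_max_right _ _
  have hzero : ∀ a, a ∉ Metric.closedBall x₀ ε → h a = 0 := by
    intro a ha
    rw [Metric.mem_closedBall, not_le] at ha
    have : 1 - dist a x₀ / ε ≤ 0 := by
      have : (1 : ℝ) ≤ dist a x₀ / ε := (one_le_div hε).2 ha.le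
      linarith
    simpa [hh] using max_eq_right this
  have hbound : ∀ a, ‖h a‖ ≤ (Metric.closedBall x₀ ε).indicator (fun _ => (1 : ℝ)) a := by
    intro a
    rw [Real.norm_eq_abs, abs_of_nonneg (hnn a)]
    by_cases ha : a ∈ Metric.closedBall x₀ ε
    · rw [Set.indicator_of_mem ha]
      have : dist a x₀ / ε ≥ 0 := div_nonneg dist_nonneg hε.le
      simp only [hh]
      refine max_le (by linarith) (by norm_num)
    · rw [Set.indicator_of_notMem ha, hzero a ha]
  have hind : Integrable ((Metric.closedBall x₀ ε).indicator (fun _ => (1 : ℝ))) μ :=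
    (integrable_indicator_iff measurableSet_closedBall).2
      (integrableOn_const hfin.ne)
  have hint : Integrable h μ :=
    Integrable.mono' hind hcont.aestronglyMeasurable (ae_of_all _ hbound)
  have hpos : 0 < ∫ a, h a ∂μ := by
    rw [integral_pos_iff_support_of_nonneg hnn hint]
    refine lt_of_lt_of_le (hsupp (Metric.ball x₀ ε) Metric.isOpen_ball
      ⟨x₀, Metric.mem_ball_self hε⟩) (measure_mono ?_)
    intro a ha
    rw [Metric.mem_ball] at ha
    have h1 : 0 < 1 - dist a x₀ / ε := by
      have : dist a x₀ / ε < 1 := (div_lt_one hε).2 ha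
      linarith
    simp only [Function.mem_support, hh]
    positivity
  refine ⟨fun a => (∫ a, h a ∂μ)⁻¹ * h a, (continuous_const.mul hcont),
    fun a => mul_nonneg (inv_nonneg.2 hpos.le) (hnn a),
    fun a ha => by simp [hzero a ha], hint.const_mul _, ?_⟩
  rw [integral_const_mul, inv_mul_cancel₀ hpos.ne']

end Aux

theorem stmt_11 {X : Type*} [MetricSpace X] [TopologicalSpace.SeparableSpace X]
    [MeasurableSpace X] [BorelSpace X]
    (μ : Measure X) [IsLocallyFiniteMeasure μ]
    (hsupp : ∀ U : Set X, IsOpen U → U.Nonempty → 0 < μ U)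
    {N : ℕ} (hN : 1 ≤ N) (K : X → X → Matrix (Fin N) (Fin N) ℝ)
    (hKcont : Continuous (fun p : X × X => K p.1 p.2))
    (hKbdd : ∃ C : ℝ, ∀ x y : X, frobNorm (K x y) ≤ C)
    (hsym : ∀ x y : X, K x y = (K y x)ᵀ)
    (hipd : ∀ f : X → EuclideanSpace ℝ (Fin N), Continuous f → Integrable f μ →
      0 ≤ ∫ x, ∫ y, (f x) ⬝ᵥ ((K x y) *ᵥ (f y)) ∂μ ∂μ) :
    ∀ (n : ℕ) (x : Fin n → X) (c : Fin n → Fin N → ℝ),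
      0 ≤ ∑ i : Fin n, ∑ j : Fin n, c i ⬝ᵥ ((K (x i) (x j)) *ᵥ c j) := by
  intro n x c
  haveI : SecondCountableTopology X := UniformSpace.secondCountable_of_separable X
  obtain ⟨C, hC⟩ := hKbdd
  rcases Nat.eq_zero_or_pos n with hn | hn
  · subst hn; simp
  haveI : Nonempty (Fin n) := ⟨⟨0, hn⟩⟩
  -- the continuous quadratic kernels
  set ψ : Fin n → Fin n → X → X → ℝ := fun i j a b => c i ⬝ᵥ (K a b *ᵥ c j) with hψdef
  have hψcont : ∀ i j, Continuous fun p : X × X => ψ i j p.1 p.2 := by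
    intro i j
    simp only [hψdef, dotProduct, mulVec]
    refine continuous_finset_sum _ fun k _ => Continuous.mul continuous_const ?_
    refine continuous_finset_sum _ fun l _ => Continuous.mul ?_ continuous_const
    exact (continuous_apply l).comp ((continuous_apply k).comp hKcont)
  have hψbd : ∀ i j a b, |ψ i j a b| ≤ C * ((∑ k, |c i k|) * (∑ l, |c j l|)) :=
    fun i j a b => dot_bound (K a b) (c i) (c j) (hC a b)
  refine le_of_forall_pos_le_add fun η hη => ?_
  have hn1 : (0 : ℝ) < (n : ℝ) * n + 1 := by positivity
  set η' : ℝ := η / ((n : ℝ) * n + 1) with hη'def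
  have hη' : 0 < η' := div_pos hη hn1
  -- radii of finite measure
  have hr : ∀ i : Fin n, ∃ r : ℝ, 0 < r ∧ μ (Metric.closedBall (x i) r) < ⊤ := by
    intro i
    obtain ⟨s, hs, hμs⟩ := μ.finiteAt_nhds (x i)
    obtain ⟨δ, hδ0, hδs⟩ := Metric.mem_nhds_iff.1 hs
    refine ⟨δ / 2, by positivity, lt_of_le_of_lt (measure_mono ?_) hμs⟩
    exact (Metric.closedBall_subset_ball (by linarith)).trans hδs
  choose r hr0 hrfin using hr
  -- continuity radii
  have hδex : ∀ i j : Fin n, ∃ δ : ℝ, 0 < δ ∧ ∀ a b : X, dist a (x i) < δ → dist b (x j) < δ →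
      |ψ i j a b - ψ i j (x i) (x j)| ≤ η' := by
    intro i j
    have h3 : ∀ᶠ p : X × X in nhds (x i, x j),
        |ψ i j p.1 p.2 - ψ i j (x i) (x j)| ≤ η' := by
      have := Metric.tendsto_nhds.mp ((hψcont i j).continuousAt (x := (x i, x j))) η' hη'
      filter_upwards [this] with p hp
      rw [Real.dist_eq] at hp
      exact hp.le
    obtain ⟨δ, hδ0, hδ⟩ := Metric.eventually_nhds_iff_ball.mp h3
    refine ⟨δ, hδ0, fun a b ha hb => hδ (a, b) ?_⟩
    rw [← ball_prod_same]
    exact ⟨Metric.mem_ball.2 ha, Metric.mem_ball.2 hb⟩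
  choose δ hδ0 hδη using hδex
  -- a single small radius
  have hne : (Finset.univ : Finset (Fin n)).Nonempty := Finset.univ_nonempty
  set ε : ℝ := min (Finset.univ.inf' hne r)
      ((Finset.univ.inf' hne fun i => Finset.univ.inf' hne (δ i)) / 2) with hεdef
  have hε0 : 0 < ε := by
    refine lt_min ((Finset.lt_inf'_iff hne).2 fun i _ => hr0 i) ?_
    have : 0 < Finset.univ.inf' hne fun i => Finset.univ.inf' hne (δ i) :=
      (Finset.lt_inf'_iff hne).2 fun i _ => (Finset.lt_inf'_iff hne).2 fun j _ => hδ0 i j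
    linarith
  have hεr : ∀ i, ε ≤ r i := fun i =>
    le_trans (min_le_left _ _) (Finset.inf'_le _ (Finset.mem_univ i))
  have hεδ : ∀ i j, ε < δ i j := by
    intro i j
    refine lt_of_le_of_lt (min_le_right _ _) ?_
    have h1 : (Finset.univ.inf' hne fun i => Finset.univ.inf' hne (δ i)) ≤ δ i j := by
      calc (Finset.univ.inf' hne fun i => Finset.univ.inf' hne (δ i)) ≤
            Finset.univ.inf' hne (δ i) := Finset.inf'_le _ (Finset.mem_univ i)
        _ ≤ δ i j := Finset.inf'_le _ (Finset.mem_univ j)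
    have h2 : 0 < Finset.univ.inf' hne fun i => Finset.univ.inf' hne (δ i) :=
      (Finset.lt_inf'_iff hne).2 fun i _ => (Finset.lt_inf'_iff hne).2 fun j _ => hδ0 i j
    linarith
  -- bump functions
  have hbump : ∀ i : Fin n, ∃ g : X → ℝ, Continuous g ∧ (∀ a, 0 ≤ g a) ∧
      (∀ a, a ∉ Metric.closedBall (x i) ε → g a = 0) ∧ Integrable g μ ∧ ∫ a, g a ∂μ = 1 :=
    fun i => exists_bump μ hsupp (x i) hε0
      (lt_of_le_of_lt (measure_mono (Metric.closedBall_subset_closedBall (hεr i))) (hrfin i))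
  choose g hgc hg0 hgz hgi hg1 using hbump
  -- the test function
  set f : X → EuclideanSpace ℝ (Fin N) := fun a => ∑ i, g i a • (WithLp.toLp 2 (c i) : EuclideanSpace ℝ (Fin N))
    with hfdef
  have hfc : Continuous f :=
    continuous_finset_sum _ fun i _ => ((hgc i).smul continuous_const)
  have hfi : Integrable f μ :=
    integrable_finset_sum _ fun i _ => ((hgi i).smul_const _)
  have key := hipd f hfc hfi
  -- pointwise expansion
  have hpt : ∀ a b : X, f a ⬝ᵥ (K a b *ᵥ f b) =
      ∑ i, ∑ j, g i a * g j b * ψ i j a b := by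
    intro a b
    have hf : ∀ a, (f a).ofLp = ∑ i, g i a • c i := fun a => by simp [hfdef]
    rw [hf a, hf b]
    exact bilin_expand (K a b) (fun i => g i a) (fun j => g j b) c c
  -- product measure formulation
  set G : Fin n → Fin n → X × X → ℝ :=
    fun i j p => g i p.1 * g j p.2 * ψ i j p.1 p.2 with hGdef
  have hgg : ∀ i j, Integrable (fun p : X × X => g i p.1 * g j p.2) (μ.prod μ) :=
    fun i j => (hgi i).mul_prod (hgi j)
  have hGcont : ∀ i j, Continuous (G i j) := fun i j =>
    (((hgc i).comp continuous_fst).mul ((hgc j).comp continuous_snd)).mul (hψcont i j)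
  set B : Fin n → Fin n → ℝ := fun i j => C * ((∑ k, |c i k|) * (∑ l, |c j l|)) with hBdef
  have hGi : ∀ i j, Integrable (G i j) (μ.prod μ) := by
    intro i j
    refine Integrable.mono' ((hgg i j).const_mul (B i j))
      (hGcont i j).aestronglyMeasurable (ae_of_all _ fun p => ?_)
    rw [Real.norm_eq_abs, hGdef]
    simp only
    rw [abs_mul, abs_mul, abs_of_nonneg (hg0 i p.1), abs_of_nonneg (hg0 j p.2)]
    calc g i p.1 * g j p.2 * |ψ i j p.1 p.2| ≤ g i p.1 * g j p.2 * B i j := by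
          refine mul_le_mul_of_nonneg_left (hψbd i j p.1 p.2)
            (mul_nonneg (hg0 i p.1) (hg0 j p.2))
      _ = B i j * (g i p.1 * g j p.2) := by ring
  have hFeq : (fun p : X × X => f p.1 ⬝ᵥ (K p.1 p.2 *ᵥ f p.2)) =
      fun p => ∑ i, ∑ j, G i j p := funext fun p => hpt p.1 p.2
  have hF : Integrable (fun p : X × X => f p.1 ⬝ᵥ (K p.1 p.2 *ᵥ f p.2)) (μ.prod μ) := by
    rw [hFeq]
    exact integrable_finset_sum _ fun i _ => integrable_finset_sum _ fun j _ => hGi i j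
  have key2 : 0 ≤ ∑ i, ∑ j, ∫ p, G i j p ∂(μ.prod μ) := by
    have h1 : ∫ p : X × X, f p.1 ⬝ᵥ (K p.1 p.2 *ᵥ f p.2) ∂(μ.prod μ) =
        ∫ a, ∫ b, f a ⬝ᵥ (K a b *ᵥ f b) ∂μ ∂μ := integral_prod _ hF
    have h2 : ∫ p : X × X, f p.1 ⬝ᵥ (K p.1 p.2 *ᵥ f p.2) ∂(μ.prod μ) =
        ∑ i, ∑ j, ∫ p, G i j p ∂(μ.prod μ) := by
      rw [hFeq, integral_finset_sum _ fun i _ => integrable_finset_sum _ fun j _ => hGi i j]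
      exact Finset.sum_congr rfl fun i _ => integral_finset_sum _ fun j _ => hGi i j
    rw [← h2, h1]
    exact key
  -- each double integral is close to the point value
  have hJclose : ∀ i j, |(∫ p, G i j p ∂(μ.prod μ)) - ψ i j (x i) (x j)| ≤ η' := by
    intro i j
    have h1 : ∫ p : X × X, g i p.1 * g j p.2 ∂(μ.prod μ) = 1 := by
      rw [integral_prod_mul, hg1 i, hg1 j, one_mul]
    have h2 : (∫ p, G i j p ∂(μ.prod μ)) - ψ i j (x i) (x j) =
        ∫ p : X × X, (g i p.1 * g j p.2) * (ψ i j p.1 p.2 - ψ i j (x i) (x j)) ∂(μ.prod μ) := by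
      have heq : (fun p : X × X => (g i p.1 * g j p.2) * (ψ i j p.1 p.2 - ψ i j (x i) (x j))) =
          fun p => G i j p - ψ i j (x i) (x j) * (g i p.1 * g j p.2) := by
        funext p; rw [hGdef]; ring
      rw [heq, integral_sub (hGi i j) ((hgg i j).const_mul _), integral_const_mul, h1, mul_one]
    rw [h2, ← Real.norm_eq_abs]
    have hb : ∀ p : X × X,
        ‖(g i p.1 * g j p.2) * (ψ i j p.1 p.2 - ψ i j (x i) (x j))‖ ≤
          η' * (g i p.1 * g j p.2) := by
      intro p
      by_cases h1' : g i p.1 = 0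
      · rw [h1']; simp [mul_nonneg hη'.le (mul_nonneg (le_refl 0) (hg0 j p.2))]
      by_cases h2' : g j p.2 = 0
      · rw [h2']; simp
      have hp1 : p.1 ∈ Metric.closedBall (x i) ε := by
        by_contra hcon; exact h1' (hgz i p.1 hcon)
      have hp2 : p.2 ∈ Metric.closedBall (x j) ε := by
        by_contra hcon; exact h2' (hgz j p.2 hcon)
      rw [Metric.mem_closedBall] at hp1 hp2
      have hψη : |ψ i j p.1 p.2 - ψ i j (x i) (x j)| ≤ η' :=
        hδη i j p.1 p.2 (lt_of_le_of_lt hp1 (hεδ i j)) (lt_of_le_of_lt hp2 (hεδ i j))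
      rw [Real.norm_eq_abs, abs_mul,
        abs_of_nonneg (mul_nonneg (hg0 i p.1) (hg0 j p.2))]
      calc g i p.1 * g j p.2 * |ψ i j p.1 p.2 - ψ i j (x i) (x j)| ≤
            g i p.1 * g j p.2 * η' :=
          mul_le_mul_of_nonneg_left hψη (mul_nonneg (hg0 i p.1) (hg0 j p.2))
        _ = η' * (g i p.1 * g j p.2) := by ring
    calc ‖∫ p : X × X, (g i p.1 * g j p.2) * (ψ i j p.1 p.2 - ψ i j (x i) (x j)) ∂(μ.prod μ)‖ ≤
          ∫ p : X × X, η' * (g i p.1 * g j p.2) ∂(μ.prod μ) :=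
        norm_integral_le_of_norm_le ((hgg i j).const_mul η') (ae_of_all _ hb)
      _ = η' := by rw [integral_const_mul, h1, mul_one]
  -- putting everything together
  have hsum : ∑ i, ∑ j, ∫ p, G i j p ∂(μ.prod μ) ≤
      (∑ i, ∑ j, ψ i j (x i) (x j)) + (n : ℝ) * n * η' := by
    have h1 : ∀ i j : Fin n, ∫ p, G i j p ∂(μ.prod μ) ≤ ψ i j (x i) (x j) + η' := by
      intro i j
      have := abs_le.1 (hJclose i j)
      linarith [this.2]
    calc ∑ i, ∑ j, ∫ p, G i j p ∂(μ.prod μ) ≤ ∑ i, ∑ j, (ψ i j (x i) (x j) + η') :=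
        Finset.sum_le_sum fun i _ => Finset.sum_le_sum fun j _ => h1 i j
      _ = (∑ i, ∑ j, ψ i j (x i) (x j)) + (n : ℝ) * n * η' := by
        simp [Finset.sum_add_distrib, Finset.card_univ, mul_assoc]
  have hηη : (n : ℝ) * n * η' ≤ η := by
    rw [hη'def, ← mul_div_assoc, div_le_iff₀ hn1]
    nlinarith [hη.le, Nat.cast_nonneg (α := ℝ) n]
  have : 0 ≤ (∑ i, ∑ j, ψ i j (x i) (x j)) + (n : ℝ) * n * η' := le_trans key2 hsum
  have hfinal : 0 ≤ (∑ i, ∑ j, ψ i j (x i) (x j)) + η := by linarith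
  exact hfinal
end

section
/- Let X be a separable metric space with a locally finite Borel measure μ with support X, N ≥ 1, and K : X × X → ℝ^{N×N} bounded, continuous, with K(x,y) = K(y,x)ᵀ. If K is positive definite (∑_{i,j} cᵢᵀ K(xᵢ,xⱼ) cⱼ ≥ 0 for all finite families of points and vectors), then K is integrally positive definite with respect to L¹(X,ℝ^N): ∫_X∫_X f(x)ᵀ K(x,y) f(y) dμ(x) dμ(y) ≥ 0 for all f ∈ L¹(X, ℝ^N). -/
open MeasureTheory Matrix

lemma coord_le_norm {N : ℕ} (v : EuclideanSpace ℝ (Fin N)) (i : Fin N) : |v i| ≤ ‖v‖ := by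
  rw [EuclideanSpace.norm_eq, ← Real.sqrt_sq_eq_abs]
  apply Real.sqrt_le_sqrt
  calc v i ^ 2 = ‖v i‖ ^ 2 := by rw [Real.norm_eq_abs, sq_abs]
    _ ≤ ∑ j : Fin N, ‖v j‖ ^ 2 := Finset.single_le_sum (f := fun j => ‖v j‖ ^ 2)
        (fun j _ => by positivity) (Finset.mem_univ i)

lemma bilin_bound {N : ℕ} {C : ℝ} (hC : 0 ≤ C) (A : Matrix (Fin N) (Fin N) ℝ)
    (hA : ∀ i j, |A i j| ≤ C) (v w : EuclideanSpace ℝ (Fin N)) :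
    |v ⬝ᵥ (A *ᵥ w)| ≤ C * N ^ 2 * (‖v‖ * ‖w‖) := by
  have h1 : |v ⬝ᵥ (A *ᵥ w)| ≤ ∑ i : Fin N, ∑ j : Fin N, |v i| * |A i j| * |w j| := by
    refine (Finset.abs_sum_le_sum_abs _ _).trans (Finset.sum_le_sum fun i _ => ?_)
    rw [abs_mul, mulVec, dotProduct]
    refine (mul_le_mul_of_nonneg_left (Finset.abs_sum_le_sum_abs _ _) (abs_nonneg _)).trans_eq ?_
    rw [Finset.mul_sum]
    exact Finset.sum_congr rfl fun j _ => by rw [abs_mul]; ring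
  refine h1.trans ?_
  have h2 : ∀ i j : Fin N, |v i| * |A i j| * |w j| ≤ ‖v‖ * C * ‖w‖ := fun i j =>
    mul_le_mul (mul_le_mul (coord_le_norm v i) (hA i j) (abs_nonneg _) (norm_nonneg _))
      (coord_le_norm w j) (abs_nonneg _) (by positivity)
  calc ∑ i : Fin N, ∑ j : Fin N, |v i| * |A i j| * |w j|
      ≤ ∑ _i : Fin N, ∑ _j : Fin N, ‖v‖ * C * ‖w‖ :=
        Finset.sum_le_sum fun i _ => Finset.sum_le_sum fun j _ => h2 i j
    _ = C * N ^ 2 * (‖v‖ * ‖w‖) := by simp [Finset.sum_const]; ring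

lemma integral_coord {X : Type*} [MeasurableSpace X] (ν : Measure X) {N : ℕ}
    {g : X → EuclideanSpace ℝ (Fin N)} (hg : Integrable g ν) (j : Fin N) :
    ∫ y, g y j ∂ν = (∫ y, g y ∂ν) j := by
  have := (EuclideanSpace.proj (𝕜 := ℝ) j).integral_comp_comm hg
  simpa using this

lemma integral_bilin {X : Type*} [MeasurableSpace X] (ν : Measure X) {N : ℕ}
    {g : X → EuclideanSpace ℝ (Fin N)} (hg : Integrable g ν)
    (B : Matrix (Fin N) (Fin N) ℝ) (a : EuclideanSpace ℝ (Fin N))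
    (c : Fin N → ℝ) (hc : ∀ j, ∫ y, g y j ∂ν = c j) :
    ∫ y, a ⬝ᵥ (B *ᵥ g y) ∂ν = a ⬝ᵥ (B *ᵥ c) := by
  have hint : ∀ (i j : Fin N), Integrable (fun y => a i * (B i j * g y j)) ν := fun i j =>
    (((EuclideanSpace.proj (𝕜 := ℝ) j).integrable_comp hg).const_mul (B i j)).const_mul (a i)
  have h0 : (fun y => a ⬝ᵥ (B *ᵥ g y)) = fun y => ∑ i, ∑ j, a i * (B i j * g y j) := by
    funext y; simp [dotProduct, mulVec, Finset.mul_sum]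
  rw [h0]
  calc ∫ y, ∑ i, ∑ j, a i * (B i j * g y j) ∂ν
      = ∑ i, ∑ j, ∫ y, a i * (B i j * g y j) ∂ν := by
        rw [integral_finset_sum _ (fun i _ => integrable_finset_sum _ (fun j _ => hint i j))]
        exact Finset.sum_congr rfl fun i _ => integral_finset_sum _ fun j _ => hint i j
    _ = ∑ i, ∑ j, a i * (B i j * c j) := by
        refine Finset.sum_congr rfl fun i _ => Finset.sum_congr rfl fun j _ => ?_
        rw [integral_const_mul, integral_const_mul, hc j]
    _ = a ⬝ᵥ (B *ᵥ c) := by simp [dotProduct, mulVec, Finset.mul_sum]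

lemma integral_dot {X : Type*} [MeasurableSpace X] (ν : Measure X) {N : ℕ}
    {g : X → EuclideanSpace ℝ (Fin N)} (hg : Integrable g ν)
    (w : Fin N → ℝ) (c : Fin N → ℝ) (hc : ∀ j, ∫ y, g y j ∂ν = c j) :
    ∫ y, g y ⬝ᵥ w ∂ν = c ⬝ᵥ w := by
  have hint : ∀ (i : Fin N), Integrable (fun y => g y i * w i) ν := fun i =>
    ((EuclideanSpace.proj (𝕜 := ℝ) i).integrable_comp hg).mul_const (w i)
  simp only [dotProduct]
  rw [integral_finset_sum _ (fun i _ => hint i)]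
  refine Finset.sum_congr rfl fun i _ => ?_
  rw [integral_mul_const, hc i]

lemma meas_bilin {Z : Type*} [MeasurableSpace Z] {N : ℕ}
    (v w : Z → EuclideanSpace ℝ (Fin N)) (hv : Measurable v) (hw : Measurable w)
    (A : Z → Matrix (Fin N) (Fin N) ℝ) (hA : ∀ i j, Measurable (fun z => A z i j)) :
    Measurable (fun z => v z ⬝ᵥ (A z *ᵥ w z)) := by
  simp only [dotProduct, mulVec]
  refine Finset.measurable_sum _ fun i _ => Measurable.mul ?_ ?_
  · exact ((EuclideanSpace.proj (𝕜 := ℝ) i).continuous.measurable).comp hv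
  · refine Finset.measurable_sum _ fun j _ => Measurable.mul (hA i j) ?_
    exact ((EuclideanSpace.proj (𝕜 := ℝ) j).continuous.measurable).comp hw

lemma cont_eval {N : ℕ} (v w : Fin N → ℝ) :
    Continuous fun A : Matrix (Fin N) (Fin N) ℝ => v ⬝ᵥ (A *ᵥ w) := by
  simp only [dotProduct, mulVec]
  refine continuous_finset_sum _ fun i _ => (continuous_const.mul ?_)
  refine continuous_finset_sum _ fun j _ => (Continuous.mul ?_ continuous_const)
  exact (continuous_apply j).comp (continuous_apply i)

theorem stmt_12 {X : Type*} [MetricSpace X] [TopologicalSpace.SeparableSpace X]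
    [MeasurableSpace X] [BorelSpace X]
    (μ : Measure X) [IsLocallyFiniteMeasure μ]
    (hsupp : ∀ U : Set X, IsOpen U → U.Nonempty → 0 < μ U)
    {N : ℕ} (hN : 1 ≤ N) (K : X → X → Matrix (Fin N) (Fin N) ℝ)
    (hKcont : Continuous (fun p : X × X => K p.1 p.2))
    (hKbdd : ∃ C : ℝ, ∀ x y : X, frobNorm (K x y) ≤ C)
    (hsym : ∀ x y : X, K x y = (K y x)ᵀ)
    (hpd : ∀ (n : ℕ) (x : Fin n → X) (c : Fin n → Fin N → ℝ),
      0 ≤ ∑ i : Fin n, ∑ j : Fin n, c i ⬝ᵥ ((K (x i) (x j)) *ᵥ c j)) :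
    ∀ f : X → EuclideanSpace ℝ (Fin N), Integrable f μ →
      0 ≤ ∫ x, ∫ y, (f x) ⬝ᵥ ((K x y) *ᵥ (f y)) ∂μ ∂μ := by
  intro f hf
  haveI : SecondCountableTopology X := UniformSpace.secondCountable_of_separable X
  rcases isEmpty_or_nonempty X with hX | hX
  · simp [integral_of_isEmpty]
  obtain ⟨C, hCb⟩ := hKbdd
  have hC0 : 0 ≤ C := by
    have h := hCb (Classical.arbitrary X) (Classical.arbitrary X)
    unfold frobNorm at h
    exact le_trans (Real.sqrt_nonneg _) h
  have hent : ∀ x y i j, |K x y i j| ≤ C := by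
    intro x y i j
    have h := hCb x y
    unfold frobNorm at h
    refine le_trans ?_ h
    rw [← Real.sqrt_sq_eq_abs]
    apply Real.sqrt_le_sqrt
    calc (K x y i j) ^ 2 ≤ ∑ j' : Fin N, (K x y i j') ^ 2 :=
          Finset.single_le_sum (f := fun j' => (K x y i j') ^ 2)
            (fun j' _ => sq_nonneg _) (Finset.mem_univ j)
      _ ≤ ∑ i' : Fin N, ∑ j' : Fin N, (K x y i' j') ^ 2 :=
          Finset.single_le_sum (f := fun i' => ∑ j' : Fin N, (K x y i' j') ^ 2)
            (fun i' _ => Finset.sum_nonneg fun _ _ => sq_nonneg _) (Finset.mem_univ i)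
  set M : ℝ := C * N ^ 2 with hMdef
  have hbd : ∀ (x y : X) (v w : EuclideanSpace ℝ (Fin N)),
      |v ⬝ᵥ (K x y *ᵥ w)| ≤ M * (‖v‖ * ‖w‖) := fun x y v w =>
    bilin_bound hC0 _ (hent x y) v w
  -- replace f by a strongly measurable representative
  obtain ⟨g, hgm, hfg⟩ := hf.1
  have hg : Integrable g μ := hf.congr hfg
  have hrw : ∫ x, ∫ y, f x ⬝ᵥ (K x y *ᵥ f y) ∂μ ∂μ
      = ∫ x, ∫ y, g x ⬝ᵥ (K x y *ᵥ g y) ∂μ ∂μ := by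
    apply integral_congr_ae
    filter_upwards [hfg] with x hx
    rw [hx]
    exact integral_congr_ae (hfg.mono fun y hy => by simp only [hy])
  rw [hrw]
  have hgme : Measurable g := hgm.measurable
  -- dense sequence and approximating projections
  have hu := TopologicalSpace.denseRange_denseSeq X
  set u := TopologicalSpace.denseSeq X with hudef
  have hex : ∀ (n : ℕ) (x : X), ∃ k, dist x (u k) < 1 / (n + 1) := fun n x =>
    Metric.denseRange_iff.mp hu x _ (by positivity)
  set idx : ℕ → X → ℕ := fun n x => Nat.find (hex n x) with hidxdef
  have hidx_dist : ∀ n x, dist x (u (idx n x)) < 1 / (n + 1) := fun n x => Nat.find_spec (hex n x)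
  have hidx_meas : ∀ n, Measurable (idx n) := by
    intro n
    apply measurable_to_countable'
    intro k
    have he : idx n ⁻¹' {k} = (Metric.ball (u k) (1 / (n + 1))) ∩
        ⋂ (j : ℕ) (_ : j < k), (Metric.ball (u j) (1 / (n + 1)))ᶜ := by
      ext x
      simp only [Set.mem_preimage, Set.mem_singleton_iff, hidxdef, Nat.find_eq_iff,
        Metric.mem_ball, Set.mem_inter_iff, Set.mem_iInter, Set.mem_compl_iff]
    rw [he]
    exact measurableSet_ball.inter
      (MeasurableSet.iInter fun j => MeasurableSet.iInter fun _ => measurableSet_ball.compl)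
  set p : ℕ → X → X := fun n x => u (idx n x) with hpdef
  have hp_meas : ∀ n, Measurable (p n) := fun n => measurable_from_top.comp (hidx_meas n)
  have hp_tend : ∀ x, Filter.Tendsto (fun n => p n x) Filter.atTop (nhds x) := by
    intro x
    rw [tendsto_iff_dist_tendsto_zero]
    refine squeeze_zero (fun n => dist_nonneg) (fun n => ?_)
      tendsto_one_div_add_atTop_nhds_zero_nat
    rw [dist_comm]; exact (hidx_dist n x).le
  -- the approximating integrands on the product space
  set Gf : ℕ → X × X → ℝ := fun n z => g z.1 ⬝ᵥ (K (p n z.1) (p n z.2) *ᵥ g z.2) with hGfdef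
  set G : X × X → ℝ := fun z => g z.1 ⬝ᵥ (K z.1 z.2 *ᵥ g z.2) with hGdef
  have hKm : ∀ i j, Measurable fun q : X × X => K q.1 q.2 i j := fun i j =>
    ((continuous_apply j).comp ((continuous_apply i).comp hKcont)).measurable
  have hGn_meas : ∀ n, Measurable (Gf n) := by
    intro n
    apply meas_bilin _ _ (hgme.comp measurable_fst) (hgme.comp measurable_snd)
    intro i j
    exact (hKm i j).comp
      (((hp_meas n).comp measurable_fst).prodMk ((hp_meas n).comp measurable_snd))
  have hG_meas : Measurable G :=
    meas_bilin _ _ (hgme.comp measurable_fst) (hgme.comp measurable_snd) _ (fun i j => hKm i j)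
  have hD : Integrable (fun z : X × X => M * (‖g z.1‖ * ‖g z.2‖)) (μ.prod μ) :=
    (hg.norm.mul_prod hg.norm).const_mul M
  have hGn_int : ∀ n, Integrable (Gf n) (μ.prod μ) := fun n =>
    Integrable.mono' hD ((hGn_meas n).aestronglyMeasurable)
      (Filter.Eventually.of_forall fun z => by
        simpa [Real.norm_eq_abs] using hbd (p n z.1) (p n z.2) (g z.1) (g z.2))
  have hG_int : Integrable G (μ.prod μ) :=
    Integrable.mono' hD hG_meas.aestronglyMeasurable
      (Filter.Eventually.of_forall fun z => by
        simpa [Real.norm_eq_abs] using hbd z.1 z.2 (g z.1) (g z.2))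
  -- nonnegativity of each approximation
  have hnonneg : ∀ n, 0 ≤ ∫ z, Gf n z ∂(μ.prod μ) := by
    intro n
    set S : ℕ → Set X := fun k => idx n ⁻¹' {k} with hSdef
    have hSm : ∀ k, MeasurableSet (S k) := fun k => (hidx_meas n) (measurableSet_singleton k)
    have hSmem : ∀ k x, x ∈ S k ↔ idx n x = k := fun k x => Iff.rfl
    set c : ℕ → EuclideanSpace ℝ (Fin N) := fun k => ∫ x in S k, g x ∂μ with hcdef
    -- double fibers on the product space
    set T : ℕ × ℕ → Set (X × X) := fun kl => (S kl.1) ×ˢ (S kl.2) with hTdef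
    have hTm : ∀ kl, MeasurableSet (T kl) := fun kl => (hSm kl.1).prod (hSm kl.2)
    have hTd : Pairwise (Function.onFun Disjoint T) := by
      rintro ⟨k, l⟩ ⟨k', l'⟩ hne
      simp only [Function.onFun, hTdef]
      rw [Set.disjoint_left]
      rintro ⟨x, y⟩ ⟨hx, hy⟩ ⟨hx', hy'⟩
      apply hne
      rw [Prod.ext_iff]
      exact ⟨((hSmem _ _).1 hx).symm.trans ((hSmem _ _).1 hx'),
             ((hSmem _ _).1 hy).symm.trans ((hSmem _ _).1 hy')⟩
    have hTu : ⋃ kl, T kl = Set.univ := by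
      apply Set.eq_univ_of_forall
      rintro ⟨x, y⟩
      exact Set.mem_iUnion.2 ⟨(idx n x, idx n y), rfl, rfl⟩
    have key : HasSum (fun kl : ℕ × ℕ => ∫ z in T kl, Gf n z ∂(μ.prod μ))
        (∫ z, Gf n z ∂(μ.prod μ)) := by
      have h := hasSum_integral_iUnion hTm hTd
        (by rw [hTu]; exact (hGn_int n).integrableOn)
      rwa [hTu, setIntegral_univ] at h
    have hpiece : ∀ kl : ℕ × ℕ, ∫ z in T kl, Gf n z ∂(μ.prod μ)
        = (c kl.1 : Fin N → ℝ) ⬝ᵥ (K (u kl.1) (u kl.2) *ᵥ (c kl.2 : Fin N → ℝ)) := by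
      rintro ⟨k, l⟩
      have h1 : ∫ z in T (k, l), Gf n z ∂(μ.prod μ)
          = ∫ z in T (k, l), g z.1 ⬝ᵥ (K (u k) (u l) *ᵥ g z.2) ∂(μ.prod μ) := by
        apply setIntegral_congr_fun (hTm (k, l))
        rintro ⟨x, y⟩ ⟨hx, hy⟩
        have hxk : idx n x = k := (hSmem _ _).1 hx
        have hyl : idx n y = l := (hSmem _ _).1 hy
        simp only [hGfdef, hpdef, hxk, hyl]
      rw [h1, hTdef]
      simp only []
      rw [← Measure.prod_restrict]
      have hB : Integrable (Function.uncurry fun x y => g x ⬝ᵥ (K (u k) (u l) *ᵥ g y))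
          ((μ.restrict (S k)).prod (μ.restrict (S l))) := by
        rw [Measure.prod_restrict]
        apply Integrable.integrableOn
        refine Integrable.mono' hD ?_ (Filter.Eventually.of_forall fun z => by
          simpa [Real.norm_eq_abs, Function.uncurry] using hbd (u k) (u l) (g z.1) (g z.2))
        exact (meas_bilin _ _ (hgme.comp measurable_fst) (hgme.comp measurable_snd)
          (fun _ => K (u k) (u l)) (fun i j => measurable_const)).aestronglyMeasurable
      rw [← integral_integral hB]
      have hinner : ∀ x : X, ∫ y, g x ⬝ᵥ (K (u k) (u l) *ᵥ g y) ∂(μ.restrict (S l))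
          = g x ⬝ᵥ (K (u k) (u l) *ᵥ (c l : Fin N → ℝ)) := fun x =>
        integral_bilin _ hg.integrableOn _ _ _
          (fun j => integral_coord _ hg.integrableOn j)
      calc ∫ x, ∫ y, g x ⬝ᵥ (K (u k) (u l) *ᵥ g y) ∂(μ.restrict (S l)) ∂(μ.restrict (S k))
          = ∫ x, g x ⬝ᵥ (K (u k) (u l) *ᵥ (c l : Fin N → ℝ)) ∂(μ.restrict (S k)) := by
            exact integral_congr_ae (Filter.Eventually.of_forall hinner)
        _ = (c k : Fin N → ℝ) ⬝ᵥ (K (u k) (u l) *ᵥ (c l : Fin N → ℝ)) :=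
            integral_dot _ hg.integrableOn _ _ (fun j => integral_coord _ hg.integrableOn j)
    have key' : HasSum (fun kl : ℕ × ℕ =>
        (c kl.1 : Fin N → ℝ) ⬝ᵥ (K (u kl.1) (u kl.2) *ᵥ (c kl.2 : Fin N → ℝ)))
        (∫ z, Gf n z ∂(μ.prod μ)) := by
      rwa [funext hpiece] at key
    have hmono : Monotone (fun m => Finset.range m ×ˢ Finset.range m) := fun m m' h =>
      Finset.product_subset_product (Finset.range_subset_range.2 h) (Finset.range_subset_range.2 h)
    have hcov : ∀ s : ℕ × ℕ, ∃ m, s ∈ Finset.range m ×ˢ Finset.range m := fun s =>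
      ⟨max s.1 s.2 + 1, Finset.mem_product.2
        ⟨Finset.mem_range.2 (by omega), Finset.mem_range.2 (by omega)⟩⟩
    refine ge_of_tendsto'
      (key'.comp (Filter.tendsto_atTop_finset_of_monotone hmono hcov)) ?_
    intro m
    have h2 : ∑ s ∈ Finset.range m ×ˢ Finset.range m,
        (c s.1 : Fin N → ℝ) ⬝ᵥ (K (u s.1) (u s.2) *ᵥ (c s.2 : Fin N → ℝ))
        = ∑ i : Fin m, ∑ j : Fin m,
          (fun i : Fin m => (c (i : ℕ) : Fin N → ℝ)) i ⬝ᵥ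
            (K (u (i : ℕ)) (u (j : ℕ)) *ᵥ (fun j : Fin m => (c (j : ℕ) : Fin N → ℝ)) j) := by
      rw [Finset.sum_product]
      rw [← Fin.sum_univ_eq_sum_range (f := fun k => ∑ l ∈ Finset.range m,
        (c k : Fin N → ℝ) ⬝ᵥ (K (u k) (u l) *ᵥ (c l : Fin N → ℝ)))]
      refine Finset.sum_congr rfl fun i _ => ?_
      rw [← Fin.sum_univ_eq_sum_range (f := fun l =>
        (c (i : ℕ) : Fin N → ℝ) ⬝ᵥ (K (u (i : ℕ)) (u l) *ᵥ (c l : Fin N → ℝ)))]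
    rw [Function.comp_apply, h2]
    exact hpd m (fun i => u (i : ℕ)) (fun i => (c (i : ℕ) : Fin N → ℝ))
  -- pass to the limit
  have hTend : Filter.Tendsto (fun n => ∫ z, Gf n z ∂(μ.prod μ)) Filter.atTop
      (nhds (∫ z, G z ∂(μ.prod μ))) := by
    refine tendsto_integral_of_dominated_convergence _
      (fun n => (hGn_meas n).aestronglyMeasurable) hD
      (fun n => Filter.Eventually.of_forall fun z => by
        simpa [Real.norm_eq_abs] using hbd (p n z.1) (p n z.2) (g z.1) (g z.2)) ?_
    refine Filter.Eventually.of_forall fun z => ?_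
    have h1 : Filter.Tendsto (fun n => (p n z.1, p n z.2)) Filter.atTop (nhds (z.1, z.2)) :=
      (hp_tend z.1).prodMk_nhds (hp_tend z.2)
    have h2 := (hKcont.tendsto (z.1, z.2)).comp h1
    exact ((cont_eval (g z.1 : Fin N → ℝ) (g z.2 : Fin N → ℝ)).tendsto _).comp h2
  have h0 : 0 ≤ ∫ z, G z ∂(μ.prod μ) := ge_of_tendsto' hTend hnonneg
  rw [show ∫ x, ∫ y, g x ⬝ᵥ (K x y *ᵥ g y) ∂μ ∂μ = ∫ z, G z ∂(μ.prod μ) from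
    integral_integral hG_int]
  exact h0
end
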